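/- For i, j ≥ 1 with i + j ≤ n + 1, there exists a surjective homomorphism of ℂ[S_n]-modules from R^n_{i,j} onto the permutation module ℂ[S_n/S_{n−i−j+2}] (the induction of the trivial module from the subgroup S_{n−i−j+2} fixing the first i+j−2 letters); in particular dim_ℂ R^n_{i,j} ≥ n!/(n−i−j+2)!. -/

import Mathlib

open MvPolynomial

set_option maxHeartbeats 1000000
set_option synthInstance.maxHeartbeats 400000

noncomputable section

/-- the ideal `(x₁y₁, …, xₙyₙ)`. -/
abbrev Bideal (n : ℕ) : Ideal (MvPolynomial (Fin n ⊕ Fin n) ℂ) :=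
  Ideal.span (Set.range fun i : Fin n => X (Sum.inl i) * X (Sum.inr i))

/-- `B n = ℂ[x₁,…,xₙ,y₁,…,yₙ]/(x₁y₁,…,xₙyₙ)`, the `n`-th tensor power of `ℂ[x,y]/(xy)`.
The variable `x_i` is `X (Sum.inl i)` and `y_i` is `X (Sum.inr i)`. -/
abbrev B (n : ℕ) : Type := MvPolynomial (Fin n ⊕ Fin n) ℂ ⧸ Bideal n

abbrev mkB (n : ℕ) : MvPolynomial (Fin n ⊕ Fin n) ℂ →ₐ[ℂ] B n :=
  Ideal.Quotient.mkₐ ℂ (Bideal n)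

def xv (n : ℕ) (i : Fin n) : B n := mkB n (X (Sum.inl i))
def yv (n : ℕ) (i : Fin n) : B n := mkB n (X (Sum.inr i))

/-- the action of a permutation `σ ∈ Sₙ` on `B n`: `σ·xᵢ = x_{σ i}`, `σ·yᵢ = y_{σ i}`. -/
def permB (n : ℕ) (σ : Equiv.Perm (Fin n)) : B n →ₐ[ℂ] B n :=
  Ideal.Quotient.liftₐ (Bideal n)
    ((mkB n).comp (MvPolynomial.rename (Sum.map ⇑σ ⇑σ)))
    (by
      intro a ha
      have h : Bideal n ≤ RingHom.ker ((mkB n).comp (MvPolynomial.rename (Sum.map ⇑σ ⇑σ))).toRingHom := by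
        rw [Ideal.span_le]
        rintro _ ⟨i, rfl⟩
        simp only [SetLike.mem_coe, RingHom.mem_ker, AlgHom.toRingHom_eq_coe, RingHom.coe_coe,
          AlgHom.comp_apply, map_mul, rename_X, Sum.map_inl, Sum.map_inr]
        rw [← map_mul, Ideal.Quotient.mkₐ_eq_mk, Ideal.Quotient.eq_zero_iff_mem]
        exact Ideal.subset_span ⟨σ i, rfl⟩
      exact h ha)

/-- evaluation at the origin. -/
def ev0 (n : ℕ) : B n →ₐ[ℂ] ℂ :=
  Ideal.Quotient.liftₐ (Bideal n) (aeval fun _ => (0 : ℂ))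
    (by
      intro a ha
      have h : Bideal n ≤ RingHom.ker (aeval (R := ℂ) fun _ : Fin n ⊕ Fin n => (0 : ℂ)).toRingHom := by
        rw [Ideal.span_le]
        rintro _ ⟨i, rfl⟩
        simp [RingHom.mem_ker]
      exact h ha)

/-- `Jₙ`, the ideal of `B n` generated by the `Sₙ`-invariant elements vanishing at the origin. -/
def Jn (n : ℕ) : Ideal (B n) :=
  Ideal.span {p : B n | (∀ σ : Equiv.Perm (Fin n), permB n σ p = p) ∧ ev0 n p = 0}

/-- the symmetric coinvariant algebra `Rₙ = Bₙ/Jₙ`. -/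
abbrev Rn (n : ℕ) : Type := B n ⧸ Jn n

/-- the `k`-th elementary symmetric polynomial `e_k` in the `x` variables. -/
def eX (n k : ℕ) : B n :=
  ∑ S ∈ Finset.powersetCard k (Finset.univ : Finset (Fin n)), ∏ t ∈ S, xv n t

/-- the `k`-th elementary symmetric polynomial `f_k` in the `y` variables. -/
def fY (n k : ℕ) : B n :=
  ∑ S ∈ Finset.powersetCard k (Finset.univ : Finset (Fin n)), ∏ t ∈ S, yv n t

/-- the generating set `S^n_{i,j}` of the ideal `I^n_{i,j}`:
`e₁,…,e_{i−1}`, all `x_I` with `|I| = i`, `f₁,…,f_{j−1}`, all `y_J` with `|J| = j`. -/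
def Sij (n i j : ℕ) : Set (B n) :=
  {p | ∃ k, 1 ≤ k ∧ k < i ∧ p = eX n k} ∪
  {p | ∃ I : Finset (Fin n), I.card = i ∧ p = ∏ t ∈ I, xv n t} ∪
  {p | ∃ k, 1 ≤ k ∧ k < j ∧ p = fY n k} ∪
  {p | ∃ J : Finset (Fin n), J.card = j ∧ p = ∏ t ∈ J, yv n t}

/-- the ideal `I^n_{i,j}`; `R^n_{i,j} = B n ⧸ Iij n i j`. -/
def Iij (n i j : ℕ) : Ideal (B n) := Ideal.span (Sij n i j)

/-- the subgroup `S_{n-m} ≤ Sₙ` of permutations fixing the first `m` letters. -/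
def fixLT (n m : ℕ) : Subgroup (Equiv.Perm (Fin n)) where
  carrier := {σ | ∀ k : Fin n, (k : ℕ) < m → σ k = k}
  one_mem' := fun _ _ => rfl
  mul_mem' := by
    intro a b ha hb k hk
    have : (a * b) k = a (b k) := rfl
    rw [this, hb k hk, ha k hk]
  inv_mem' := by
    intro a ha k hk
    have := ha k hk
    conv_lhs => rw [← this]
    exact a.symm_apply_apply k

/-- the left regular action of `Sₙ` on `ℂ[Sₙ]`, realized as functions on `Sₙ`. -/
def regAct (n : ℕ) (σ : Equiv.Perm (Fin n)) (f : Equiv.Perm (Fin n) → ℂ) :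
    Equiv.Perm (Fin n) → ℂ := fun τ => f (σ⁻¹ * τ)

/-- the action of `Sₙ` on the permutation module `ℂ[Sₙ/S_{n-m}]`, realized as
functions on the coset space `Sₙ/S_{n-m}`. -/
def cosetAct (n m : ℕ) (σ : Equiv.Perm (Fin n))
    (f : Equiv.Perm (Fin n) ⧸ fixLT n m → ℂ) :
    Equiv.Perm (Fin n) ⧸ fixLT n m → ℂ := fun x => f (σ⁻¹ • x)

namespace St5
open MvPolynomial

variable (n i j : ℕ)

lemma mem_fixLT (m : ℕ) (σ : Equiv.Perm (Fin n)) :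
    σ ∈ fixLT n m ↔ ∀ k : Fin n, (k : ℕ) < m → σ k = k := Iff.rfl

instance fixLT_dec (m : ℕ) : DecidablePred (· ∈ fixLT n m) := fun σ =>
  decidable_of_iff (∀ k : Fin n, (k : ℕ) < m → σ k = k) (mem_fixLT n m σ).symm

abbrev Qs := Equiv.Perm (Fin n) ⧸ fixLT n (i + j - 2)

instance : Fintype (Qs n i j) := by unfold Qs; infer_instance

/-- base point -/
def zeta : Fin n ⊕ Fin n → ℂ
  | Sum.inl k => if (k : ℕ) < i - 1 then ((k : ℕ) + 1 : ℂ) else 0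
  | Sum.inr k => if (k : ℕ) < i + j - 2 ∧ i - 1 ≤ (k : ℕ) then ((k : ℕ) + 1 : ℂ) else 0

lemma fixLT_apply_lt {m : ℕ} {h : Equiv.Perm (Fin n)} (hh : h ∈ fixLT n m)
    {k : Fin n} (hk : (h k : ℕ) < m) : h k = k := by
  have h2 : h (h k) = h k := hh (h k) hk
  exact h.injective h2

lemma zeta_comp_fix (hj : 1 ≤ j) {h : Equiv.Perm (Fin n)} (hh : h ∈ fixLT n (i + j - 2)) :
    ∀ v, zeta n i j (Sum.map ⇑h ⇑h v) = zeta n i j v := by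
  have him : i - 1 ≤ i + j - 2 := by omega
  rintro (k | k)
  · simp only [Sum.map_inl, zeta]
    rcases lt_or_ge ((h k : ℕ)) (i - 1) with hlt | hge
    · rw [fixLT_apply_lt n hh (lt_of_lt_of_le hlt him)]
    · rcases lt_or_ge ((k : ℕ)) (i - 1) with hlt' | hge'
      · rw [hh k (lt_of_lt_of_le hlt' him)] at hge; omega
      · rw [if_neg (by omega), if_neg (by omega)]
  · simp only [Sum.map_inr, zeta]
    rcases lt_or_ge ((h k : ℕ)) (i + j - 2) with hlt | hge
    · rw [fixLT_apply_lt n hh hlt]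
    · rcases lt_or_ge ((k : ℕ)) (i + j - 2) with hlt' | hge'
      · rw [hh k hlt'] at hge; omega
      · rw [if_neg (by omega), if_neg (by omega)]

/-- the point indexed by a permutation: `τ · ζ`. -/
def ptP (τ : Equiv.Perm (Fin n)) : Fin n ⊕ Fin n → ℂ :=
  zeta n i j ∘ Sum.map ⇑τ⁻¹ ⇑τ⁻¹

lemma ptP_well (hj : 1 ≤ j) (τ τ' : Equiv.Perm (Fin n))
    (hrel : τ⁻¹ * τ' ∈ fixLT n (i + j - 2)) : ptP n i j τ = ptP n i j τ' := by
  funext v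
  have : (Sum.map ⇑τ⁻¹ ⇑τ⁻¹) v = (Sum.map ⇑(τ⁻¹ * τ') ⇑(τ⁻¹ * τ')) ((Sum.map ⇑τ'⁻¹ ⇑τ'⁻¹) v) := by
    cases v <;> simp [Equiv.Perm.mul_apply]
  unfold ptP
  simp only [Function.comp_apply, this]
  exact zeta_comp_fix n i j hj hrel _

/-- the point indexed by a coset. -/
def pt (hj : 1 ≤ j) : Qs n i j → (Fin n ⊕ Fin n → ℂ) :=
  Quotient.lift (ptP n i j) (fun τ τ' h => ptP_well n i j hj τ τ'
    ((QuotientGroup.leftRel_apply).1 h))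

lemma pt_mk (hj : 1 ≤ j) (τ : Equiv.Perm (Fin n)) :
    pt n i j hj (QuotientGroup.mk τ) = ptP n i j τ := rfl

lemma mk_smul (σ τ : Equiv.Perm (Fin n)) :
    (σ • (QuotientGroup.mk τ) : Qs n i j) = QuotientGroup.mk (σ * τ) := rfl

lemma pt_smul (hj : 1 ≤ j) (σ : Equiv.Perm (Fin n)) (c : Qs n i j) :
    pt n i j hj (σ⁻¹ • c) = pt n i j hj c ∘ Sum.map ⇑σ ⇑σ := by
  induction c using Quotient.inductionOn' with
  | h τ =>
    have : (Quotient.mk'' τ : Qs n i j) = QuotientGroup.mk τ := rfl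
    rw [this, mk_smul, pt_mk, pt_mk]
    funext v
    unfold ptP
    cases v <;> simp [mul_inv_rev, Equiv.Perm.mul_apply]

end St5
noncomputable section
namespace St5
open MvPolynomial

variable (n i j : ℕ) (hj : 1 ≤ j)

abbrev PolyP := MvPolynomial (Fin n ⊕ Fin n) ℂ

/-- evaluation at all points of the orbit. -/
def Emap : PolyP n →ₗ[ℂ] (Qs n i j → ℂ) :=
  LinearMap.pi fun c => (aeval (pt n i j hj c)).toLinearMap

lemma Emap_apply (p : PolyP n) (c : Qs n i j) :
    Emap n i j hj p c = aeval (pt n i j hj c) p := rfl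

/-- the permutation action on functions on cosets, as a linear map. -/
def act (σ : Equiv.Perm (Fin n)) : (Qs n i j → ℂ) →ₗ[ℂ] (Qs n i j → ℂ) where
  toFun f := fun x => f (σ⁻¹ • x)
  map_add' f g := rfl
  map_smul' c f := rfl

lemma act_apply (σ : Equiv.Perm (Fin n)) (f : Qs n i j → ℂ) (x : Qs n i j) :
    act n i j σ f x = f (σ⁻¹ • x) := rfl

lemma act_act (σ τ : Equiv.Perm (Fin n)) (f : Qs n i j → ℂ) :
    act n i j σ (act n i j τ f) = act n i j (σ * τ) f := by
  funext x
  simp only [act_apply, mul_inv_rev, mul_smul]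

lemma act_one (f : Qs n i j → ℂ) : act n i j 1 f = f := by
  funext x; simp [act_apply]

lemma Emap_rename (σ : Equiv.Perm (Fin n)) (p : PolyP n) :
    Emap n i j hj (rename (Sum.map ⇑σ ⇑σ) p) = act n i j σ (Emap n i j hj p) := by
  funext c
  rw [act_apply, Emap_apply, Emap_apply, aeval_rename]
  congr 1
  rw [pt_smul n i j hj σ c]

/-- the filtration of the function space by total degree of the evaluated polynomials. -/
def Vf (d : ℕ) : Submodule ℂ (Qs n i j → ℂ) :=
  Submodule.span ℂ (Emap n i j hj '' {p : PolyP n | p.totalDegree ≤ d})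

lemma Vf_mono {d d' : ℕ} (h : d ≤ d') : Vf n i j hj d ≤ Vf n i j hj d' :=
  Submodule.span_mono (Set.image_mono fun p hp => le_trans hp h)

lemma Emap_mem_Vf {p : PolyP n} {d : ℕ} (h : p.totalDegree ≤ d) :
    Emap n i j hj p ∈ Vf n i j hj d :=
  Submodule.subset_span ⟨p, h, rfl⟩

lemma act_mem_Vf (σ : Equiv.Perm (Fin n)) {d : ℕ} {v : Qs n i j → ℂ}
    (hv : v ∈ Vf n i j hj d) : act n i j σ v ∈ Vf n i j hj d := by
  induction hv using Submodule.span_induction with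
  | mem x hx =>
      obtain ⟨p, hp, rfl⟩ := hx
      rw [← Emap_rename]
      exact Emap_mem_Vf n i j hj (le_trans (totalDegree_rename_le _ _) hp)
  | zero => simpa using Submodule.zero_mem _
  | add x y _ _ hx hy => rw [map_add]; exact Submodule.add_mem _ hx hy
  | smul c x _ hx => rw [map_smul]; exact Submodule.smul_mem _ _ hx

/-- a raw (non-equivariant) projection onto a subspace. -/
def rawProj (W : Submodule ℂ (Qs n i j → ℂ)) : (Qs n i j → ℂ) →ₗ[ℂ] (Qs n i j → ℂ) :=
  W.subtype ∘ₗ (W.linearProjOfIsCompl _ (Classical.choose_spec W.exists_isCompl))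

lemma rawProj_mem (W : Submodule ℂ (Qs n i j → ℂ)) (v : Qs n i j → ℂ) :
    rawProj n i j W v ∈ W := (W.linearProjOfIsCompl _ _ v).2

lemma rawProj_of_mem (W : Submodule ℂ (Qs n i j → ℂ)) {v : Qs n i j → ℂ} (hv : v ∈ W) :
    rawProj n i j W v = v := by
  unfold rawProj
  have h2 := Submodule.linearProjOfIsCompl_apply_left
    (Classical.choose_spec W.exists_isCompl) ⟨v, hv⟩
  simp only [LinearMap.coe_comp, Function.comp_apply, Submodule.coe_subtype]
  exact congrArg Subtype.val h2

/-- the Maschke average of `rawProj`. -/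
def avgProj (W : Submodule ℂ (Qs n i j → ℂ)) : (Qs n i j → ℂ) →ₗ[ℂ] (Qs n i j → ℂ) :=
  (Fintype.card (Equiv.Perm (Fin n)) : ℂ)⁻¹ •
    ∑ σ : Equiv.Perm (Fin n), act n i j σ ∘ₗ rawProj n i j W ∘ₗ act n i j σ⁻¹

lemma avgProj_apply (W : Submodule ℂ (Qs n i j → ℂ)) (v : Qs n i j → ℂ) :
    avgProj n i j W v = (Fintype.card (Equiv.Perm (Fin n)) : ℂ)⁻¹ •
      ∑ σ : Equiv.Perm (Fin n), act n i j σ (rawProj n i j W (act n i j σ⁻¹ v)) := by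
  unfold avgProj
  simp [LinearMap.sum_apply]

lemma avgProj_mem (W : Submodule ℂ (Qs n i j → ℂ))
    (hW : ∀ σ : Equiv.Perm (Fin n), ∀ v ∈ W, act n i j σ v ∈ W)
    (v : Qs n i j → ℂ) : avgProj n i j W v ∈ W := by
  rw [avgProj_apply]
  exact Submodule.smul_mem _ _ (Submodule.sum_mem _ fun σ _ =>
    hW σ _ (rawProj_mem n i j W _))

lemma avgProj_of_mem (W : Submodule ℂ (Qs n i j → ℂ))
    (hW : ∀ σ : Equiv.Perm (Fin n), ∀ v ∈ W, act n i j σ v ∈ W)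
    {v : Qs n i j → ℂ} (hv : v ∈ W) : avgProj n i j W v = v := by
  rw [avgProj_apply]
  have hterm : ∀ σ : Equiv.Perm (Fin n),
      act n i j σ (rawProj n i j W (act n i j σ⁻¹ v)) = v := by
    intro σ
    rw [rawProj_of_mem n i j W (hW σ⁻¹ v hv), act_act, mul_inv_cancel, act_one]
  rw [Finset.sum_congr rfl (fun σ _ => hterm σ), Finset.sum_const, Finset.card_univ]
  rw [← Nat.cast_smul_eq_nsmul ℂ, smul_smul,
    inv_mul_cancel₀ (by exact_mod_cast (Nat.cast_ne_zero (R := ℂ)).2 Fintype.card_ne_zero), one_smul]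

lemma act_avgProj (W : Submodule ℂ (Qs n i j → ℂ)) (τ : Equiv.Perm (Fin n))
    (v : Qs n i j → ℂ) :
    act n i j τ (avgProj n i j W v) = avgProj n i j W (act n i j τ v) := by
  rw [avgProj_apply, avgProj_apply, map_smul, map_sum]
  congr 1
  rw [← Equiv.sum_comp (Equiv.mulLeft τ) (fun σ => act n i j σ (rawProj n i j W (act n i j σ⁻¹ (act n i j τ v))))]
  congr 1
  funext σ
  simp only [Equiv.coe_mulLeft]
  rw [act_act, act_act]
  congr 2
  group

end St5
end
noncomputable section
namespace St5
open MvPolynomial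

variable (n i j : ℕ) (hj : 1 ≤ j)

/-- lifted elementary symmetric polynomials in the x variables. -/
def esX (k : ℕ) : PolyP n :=
  ∑ S ∈ Finset.powersetCard k (Finset.univ : Finset (Fin n)), ∏ t ∈ S, X (Sum.inl t)

def esY (k : ℕ) : PolyP n :=
  ∑ S ∈ Finset.powersetCard k (Finset.univ : Finset (Fin n)), ∏ t ∈ S, X (Sum.inr t)

/-- the lifted generator set of `Iij` together with the generators of `Bideal`. -/
def genSet : Set (PolyP n) :=
  {p | ∃ k, 1 ≤ k ∧ k < i ∧ p = esX n k} ∪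
  {p | ∃ I : Finset (Fin n), I.card = i ∧ p = ∏ t ∈ I, X (Sum.inl t)} ∪
  {p | ∃ k, 1 ≤ k ∧ k < j ∧ p = esY n k} ∪
  {p | ∃ J : Finset (Fin n), J.card = j ∧ p = ∏ t ∈ J, X (Sum.inr t)} ∪
  Set.range (fun t : Fin n => (X (Sum.inl t) * X (Sum.inr t) : PolyP n))

lemma prod_X_homog (f : Fin n → Fin n ⊕ Fin n) (I : Finset (Fin n)) :
    (∏ t ∈ I, (X (f t) : PolyP n)).IsHomogeneous I.card := by
  have := MvPolynomial.IsHomogeneous.prod I (fun t => (X (f t) : PolyP n)) (fun _ => 1)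
    (fun t _ => isHomogeneous_X _ _)
  simpa using this

lemma esX_homog (k : ℕ) : (esX n k).IsHomogeneous k := by
  apply MvPolynomial.IsHomogeneous.sum
  intro S hS
  have hc : S.card = k := (Finset.mem_powersetCard.1 hS).2
  simpa [hc] using prod_X_homog n Sum.inl S

lemma esY_homog (k : ℕ) : (esY n k).IsHomogeneous k := by
  apply MvPolynomial.IsHomogeneous.sum
  intro S hS
  have hc : S.card = k := (Finset.mem_powersetCard.1 hS).2
  simpa [hc] using prod_X_homog n Sum.inr S

lemma zeta_inl_ne {k : Fin n} (h : zeta n i j (Sum.inl k) ≠ 0) : (k : ℕ) < i - 1 := by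
  by_contra hk
  apply h
  simp only [zeta, if_neg hk]

lemma zeta_inr_ne {k : Fin n} (h : zeta n i j (Sum.inr k) ≠ 0) :
    (k : ℕ) < i + j - 2 ∧ i - 1 ≤ (k : ℕ) := by
  by_contra hk
  apply h
  simp only [zeta, if_neg hk]

lemma zeta_mul (k : Fin n) : zeta n i j (Sum.inl k) * zeta n i j (Sum.inr k) = 0 := by
  rcases eq_or_ne (zeta n i j (Sum.inl k)) 0 with h | h
  · rw [h, zero_mul]
  · have h1 := zeta_inl_ne n i j h
    have : ¬ ((k : ℕ) < i + j - 2 ∧ i - 1 ≤ (k : ℕ)) := by omega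
    simp only [zeta, if_neg this, mul_zero]

/-- evaluation of the `xy` generators is zero. -/
lemma aeval_pt_xy (c : Qs n i j) (t : Fin n) :
    aeval (pt n i j hj c) ((X (Sum.inl t) * X (Sum.inr t) : PolyP n)) = 0 := by
  induction c using Quotient.inductionOn' with
  | h τ =>
    have : (Quotient.mk'' τ : Qs n i j) = QuotientGroup.mk τ := rfl
    rw [this, pt_mk]
    simp only [map_mul, aeval_X, ptP, Function.comp_apply, Sum.map_inl, Sum.map_inr]
    exact zeta_mul n i j _

lemma card_filter_lt (a : ℕ) :
    (Finset.univ.filter (fun k : Fin n => (k : ℕ) < a)).card ≤ a := by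
  have := Finset.card_le_card_of_injOn (f := Fin.val)
    (s := Finset.univ.filter (fun k : Fin n => (k : ℕ) < a)) (t := Finset.range a)
    (fun k hk => Finset.mem_range.2 (Finset.mem_filter.1 hk).2)
    (Fin.val_injective.injOn)
  simpa using this

/-- evaluation of the `x_I` generators is zero. -/
lemma aeval_pt_xI (hi : 1 ≤ i) (c : Qs n i j) (I : Finset (Fin n)) (hI : I.card = i) :
    aeval (pt n i j hj c) (∏ t ∈ I, (X (Sum.inl t) : PolyP n)) = 0 := by
  induction c using Quotient.inductionOn' with
  | h τ =>
    have hq : (Quotient.mk'' τ : Qs n i j) = QuotientGroup.mk τ := rfl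
    rw [hq, pt_mk]
    rw [map_prod]
    have hex : ∃ t ∈ I, zeta n i j (Sum.inl (τ⁻¹ t)) = 0 := by
      by_contra hcon
      push_neg at hcon
      have hsub : ∀ t ∈ I, τ⁻¹ t ∈ Finset.univ.filter (fun k : Fin n => (k : ℕ) < i - 1) :=
        fun t ht => Finset.mem_filter.2 ⟨Finset.mem_univ _, zeta_inl_ne n i j (hcon t ht)⟩
      have hle := Finset.card_le_card_of_injOn (fun t => τ⁻¹ t) hsub
        ((τ⁻¹).injective.injOn)
      have := card_filter_lt n (i - 1)
      omega
    obtain ⟨t, ht, hzero⟩ := hex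
    apply Finset.prod_eq_zero ht
    simp only [aeval_X, ptP, Function.comp_apply, Sum.map_inl]
    exact hzero

lemma aeval_pt_yJ (c : Qs n i j) (J : Finset (Fin n)) (hJ : J.card = j) :
    aeval (pt n i j hj c) (∏ t ∈ J, (X (Sum.inr t) : PolyP n)) = 0 := by
  induction c using Quotient.inductionOn' with
  | h τ =>
    have hq : (Quotient.mk'' τ : Qs n i j) = QuotientGroup.mk τ := rfl
    rw [hq, pt_mk]
    rw [map_prod]
    have hex : ∃ t ∈ J, zeta n i j (Sum.inr (τ⁻¹ t)) = 0 := by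
      by_contra hcon
      push_neg at hcon
      have hsub : ∀ t ∈ J, τ⁻¹ t ∈ Finset.univ.filter
          (fun k : Fin n => (k : ℕ) < i + j - 2 ∧ i - 1 ≤ (k : ℕ)) := fun t ht =>
        Finset.mem_filter.2 ⟨Finset.mem_univ _, zeta_inr_ne n i j (hcon t ht)⟩
      have hle := Finset.card_le_card_of_injOn (fun t => τ⁻¹ t) hsub
        ((τ⁻¹).injective.injOn)
      have hcard : (Finset.univ.filter
          (fun k : Fin n => (k : ℕ) < i + j - 2 ∧ i - 1 ≤ (k : ℕ))).card ≤ j - 1 := by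
        have := Finset.card_le_card_of_injOn (f := fun k : Fin n => (k : ℕ) - (i - 1))
          (s := Finset.univ.filter (fun k : Fin n => (k : ℕ) < i + j - 2 ∧ i - 1 ≤ (k : ℕ)))
          (t := Finset.range (j - 1))
          (fun k hk => by
            have hk' := (Finset.mem_filter.1 hk).2
            refine Finset.mem_range.2 ?_
            show (k : ℕ) - (i - 1) < j - 1
            omega)
          (fun k hk k' hk' hkk => by
            have h1 := (Finset.mem_filter.1 hk).2
            have h2 := (Finset.mem_filter.1 hk').2
            have hkk2 : (k : ℕ) - (i - 1) = (k' : ℕ) - (i - 1) := hkk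
            have : (k : ℕ) = (k' : ℕ) := by omega
            exact Fin.val_injective this)
        simpa using this
      omega
    obtain ⟨t, ht, hzero⟩ := hex
    apply Finset.prod_eq_zero ht
    simp only [aeval_X, ptP, Function.comp_apply, Sum.map_inr]
    exact hzero

lemma esX_eq_rename (k : ℕ) :
    esX n k = rename Sum.inl (esymm (Fin n) ℂ k) := by
  unfold esX esymm
  rw [map_sum]
  refine Finset.sum_congr rfl fun S _ => ?_
  rw [map_prod]
  simp

lemma esY_eq_rename (k : ℕ) :
    esY n k = rename Sum.inr (esymm (Fin n) ℂ k) := by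
  unfold esY esymm
  rw [map_sum]
  refine Finset.sum_congr rfl fun S _ => ?_
  rw [map_prod]
  simp

/-- evaluation of the symmetric generators is constant along the orbit. -/
lemma aeval_pt_esX (c : Qs n i j) (k : ℕ) :
    aeval (pt n i j hj c) (esX n k) = aeval (zeta n i j) (esX n k) := by
  induction c using Quotient.inductionOn' with
  | h τ =>
    have hq : (Quotient.mk'' τ : Qs n i j) = QuotientGroup.mk τ := rfl
    rw [hq, pt_mk, esX_eq_rename, aeval_rename, aeval_rename]
    have h1 : (ptP n i j τ) ∘ Sum.inl = ((zeta n i j) ∘ Sum.inl) ∘ ⇑τ⁻¹ := rfl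
    rw [h1]
    have h2 : aeval (((zeta n i j) ∘ Sum.inl) ∘ ⇑τ⁻¹) (esymm (Fin n) ℂ k) =
        aeval ((zeta n i j) ∘ Sum.inl) (rename ⇑τ⁻¹ (esymm (Fin n) ℂ k)) :=
      (aeval_rename _ _ _).symm
    rw [h2, rename_esymm (Fin n) ℂ k (τ⁻¹ : Equiv.Perm (Fin n))]

lemma aeval_pt_esY (c : Qs n i j) (k : ℕ) :
    aeval (pt n i j hj c) (esY n k) = aeval (zeta n i j) (esY n k) := by
  induction c using Quotient.inductionOn' with
  | h τ =>
    have hq : (Quotient.mk'' τ : Qs n i j) = QuotientGroup.mk τ := rfl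
    rw [hq, pt_mk, esY_eq_rename, aeval_rename, aeval_rename]
    have h1 : (ptP n i j τ) ∘ Sum.inr = ((zeta n i j) ∘ Sum.inr) ∘ ⇑τ⁻¹ := rfl
    rw [h1]
    have h2 : aeval (((zeta n i j) ∘ Sum.inr) ∘ ⇑τ⁻¹) (esymm (Fin n) ℂ k) =
        aeval ((zeta n i j) ∘ Sum.inr) (rename ⇑τ⁻¹ (esymm (Fin n) ℂ k)) :=
      (aeval_rename _ _ _).symm
    rw [h2, rename_esymm (Fin n) ℂ k (τ⁻¹ : Equiv.Perm (Fin n))]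

end St5
end
noncomputable section
namespace St5
open MvPolynomial

variable (n i j : ℕ) (hj : 1 ≤ j)

/-- degree cutoff. -/
def Nb : ℕ := Fintype.card (Qs n i j)

/-- degree-`d` correction projection. -/
def Pid (d : ℕ) : (Qs n i j → ℂ) →ₗ[ℂ] (Qs n i j → ℂ) :=
  if d = 0 then 0 else avgProj n i j (Vf n i j hj (d - 1))

lemma Pid_mem_Vf {d : ℕ} (hd : 1 ≤ d) (v : Qs n i j → ℂ) :
    Pid n i j hj d v ∈ Vf n i j hj (d - 1) := by
  rw [Pid, if_neg (by omega)]
  exact avgProj_mem n i j _ (fun σ w hw => act_mem_Vf n i j hj σ hw) v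

lemma Pid_of_mem {d : ℕ} (hd : 1 ≤ d) {v : Qs n i j → ℂ}
    (hv : v ∈ Vf n i j hj (d - 1)) : Pid n i j hj d v = v := by
  rw [Pid, if_neg (by omega)]
  exact avgProj_of_mem n i j _ (fun σ w hw => act_mem_Vf n i j hj σ hw) hv

lemma Pid_act (d : ℕ) (σ : Equiv.Perm (Fin n)) (v : Qs n i j → ℂ) :
    Pid n i j hj d (act n i j σ v) = act n i j σ (Pid n i j hj d v) := by
  rcases Nat.eq_zero_or_pos d with h | h
  · subst h; rw [Pid, if_pos rfl]; simp
  · rw [Pid, if_neg (by omega)]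
    exact (act_avgProj n i j _ σ v).symm

/-- the main linear map, upstairs. -/
def ftilde : PolyP n →ₗ[ℂ] (Qs n i j → ℂ) :=
  ∑ d ∈ Finset.range (Nb n i j + 1),
    (LinearMap.id - Pid n i j hj d) ∘ₗ Emap n i j hj ∘ₗ homogeneousComponent d

lemma ftilde_apply (p : PolyP n) :
    ftilde n i j hj p = ∑ d ∈ Finset.range (Nb n i j + 1),
      (Emap n i j hj (homogeneousComponent d p)
        - Pid n i j hj d (Emap n i j hj (homogeneousComponent d p))) := by
  rw [ftilde, LinearMap.sum_apply]
  refine Finset.sum_congr rfl fun d _ => ?_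
  simp [LinearMap.sub_apply]

/-- key step: `ftilde` kills `q * g` for `q` homogeneous and `g` a generator. -/
lemma ftilde_homog_mul (g : PolyP n) (e : ℕ) (he : 1 ≤ e) (hg : g.IsHomogeneous e)
    (hEg : ∀ (q : PolyP n) (d' : ℕ), q.IsHomogeneous d' →
      Emap n i j hj (q * g) ∈ Vf n i j hj (d' + e - 1))
    (q : PolyP n) (d' : ℕ) (hq : q.IsHomogeneous d') :
    ftilde n i j hj (q * g) = 0 := by
  have hqg : (q * g).IsHomogeneous (d' + e) := hq.mul hg
  rw [ftilde_apply]
  refine Finset.sum_eq_zero fun d _ => ?_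
  have hcomp : homogeneousComponent d (q * g) = if d = d' + e then q * g else 0 :=
    homogeneousComponent_of_mem ((mem_homogeneousSubmodule _ _).2 hqg)
  rcases eq_or_ne d (d' + e) with hde | hde
  · rw [hcomp, if_pos hde, hde]
    rw [Pid_of_mem n i j hj (by omega) (hEg q d' hq)]
    exact sub_self _
  · rw [hcomp, if_neg hde]
    simp

lemma ftilde_mul_gen (hi : 1 ≤ i) :
    ∀ g ∈ genSet n i j, ∀ q : PolyP n, ftilde n i j hj (q * g) = 0 := by
  intro g hg q
  -- decompose q into homogeneous components
  have hqsum : q * g = ∑ d' ∈ Finset.range (q.totalDegree + 1),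
      (homogeneousComponent d' q) * g := by
    rw [← Finset.sum_mul, sum_homogeneousComponent]
  rw [hqsum, map_sum]
  refine Finset.sum_eq_zero fun d' _ => ?_
  have hq' : (homogeneousComponent d' q).IsHomogeneous d' :=
    homogeneousComponent_isHomogeneous d' q
  -- case analysis on the generator
  rcases hg with (((hgx | hgI) | hgy) | hgJ) | hgxy
  · obtain ⟨k, hk1, hki, rfl⟩ := hgx
    refine ftilde_homog_mul n i j hj _ k hk1 (esX_homog n k) (fun q' e' hq'' => ?_) _ d' hq'
    have hconst : Emap n i j hj (q' * esX n k)
        = (aeval (zeta n i j) (esX n k)) • Emap n i j hj q' := by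
      funext c
      rw [Emap_apply, map_mul]
      rw [aeval_pt_esX n i j hj c k]
      rw [Pi.smul_apply, Emap_apply, smul_eq_mul, mul_comm]
    rw [hconst]
    refine Submodule.smul_mem _ _ ?_
    refine Vf_mono n i j hj (by omega) (Emap_mem_Vf n i j hj hq''.totalDegree_le)
  · obtain ⟨I, hI, rfl⟩ := hgI
    refine ftilde_homog_mul n i j hj _ i hi (hI ▸ prod_X_homog n Sum.inl I)
      (fun q' e' hq'' => ?_) _ d' hq'
    have hzero : Emap n i j hj (q' * ∏ t ∈ I, (X (Sum.inl t) : PolyP n)) = 0 := by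
      funext c
      rw [Emap_apply, map_mul, aeval_pt_xI n i j hj hi c I hI, mul_zero]
      rfl
    rw [hzero]
    exact Submodule.zero_mem _
  · obtain ⟨k, hk1, hkj, rfl⟩ := hgy
    refine ftilde_homog_mul n i j hj _ k hk1 (esY_homog n k) (fun q' e' hq'' => ?_) _ d' hq'
    have hconst : Emap n i j hj (q' * esY n k)
        = (aeval (zeta n i j) (esY n k)) • Emap n i j hj q' := by
      funext c
      rw [Emap_apply, map_mul]
      rw [aeval_pt_esY n i j hj c k]
      rw [Pi.smul_apply, Emap_apply, smul_eq_mul, mul_comm]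
    rw [hconst]
    refine Submodule.smul_mem _ _ ?_
    refine Vf_mono n i j hj (by omega) (Emap_mem_Vf n i j hj hq''.totalDegree_le)
  · obtain ⟨J, hJ, rfl⟩ := hgJ
    refine ftilde_homog_mul n i j hj _ j hj (hJ ▸ prod_X_homog n Sum.inr J)
      (fun q' e' hq'' => ?_) _ d' hq'
    have hzero : Emap n i j hj (q' * ∏ t ∈ J, (X (Sum.inr t) : PolyP n)) = 0 := by
      funext c
      rw [Emap_apply, map_mul, aeval_pt_yJ n i j hj c J hJ, mul_zero]
      rfl
    rw [hzero]
    exact Submodule.zero_mem _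
  · obtain ⟨t, rfl⟩ := hgxy
    have hxy : ((X (Sum.inl t) * X (Sum.inr t) : PolyP n)).IsHomogeneous 2 := by
      have := (isHomogeneous_X ℂ (Sum.inl t : Fin n ⊕ Fin n)).mul
        (isHomogeneous_X ℂ (Sum.inr t : Fin n ⊕ Fin n))
      simpa using this
    refine ftilde_homog_mul n i j hj _ 2 (by omega) hxy (fun q' e' hq'' => ?_) _ d' hq'
    have hzero : Emap n i j hj (q' * (X (Sum.inl t) * X (Sum.inr t))) = 0 := by
      funext c
      rw [Emap_apply, map_mul, aeval_pt_xy n i j hj c t, mul_zero]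
      rfl
    rw [hzero]
    exact Submodule.zero_mem _

/-- `ftilde` kills the span of the lifted generators. -/
lemma ftilde_span_zero (hi : 1 ≤ i) {p : PolyP n}
    (hp : p ∈ Ideal.span (genSet n i j)) : ftilde n i j hj p = 0 := by
  rw [← Ideal.submodule_span_eq, Submodule.mem_span_set] at hp
  obtain ⟨cf, hsupp, rfl⟩ := hp
  rw [Finsupp.sum, map_sum]
  refine Finset.sum_eq_zero fun g hg => ?_
  rw [smul_eq_mul]
  exact ftilde_mul_gen n i j hj hi g (hsupp hg) (cf g)

end St5
end
noncomputable section
namespace St5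
open MvPolynomial

variable (n i j : ℕ) (hj : 1 ≤ j)

lemma degree_mapDomain {α β : Type*} (f : α → β) (d : α →₀ ℕ) :
    (Finsupp.mapDomain f d).degree = d.degree := by
  classical
  have h := Finsupp.sum_mapDomain_index (f := f) (s := d)
    (h := fun (_ : β) (e : ℕ) => e) (fun _ => rfl) (fun _ _ _ => rfl)
  simpa [Finsupp.degree_apply, Finsupp.sum] using h

lemma hc_rename (g : Fin n ⊕ Fin n → Fin n ⊕ Fin n) (d : ℕ) (p : PolyP n) :
    homogeneousComponent d (rename g p) = rename g (homogeneousComponent d p) := by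
  induction p using MvPolynomial.induction_on' with
  | monomial u a =>
      rw [rename_monomial]
      rw [homogeneousComponent_of_mem ((mem_homogeneousSubmodule _ _).2
        (isHomogeneous_monomial a (rfl : (Finsupp.mapDomain g u).degree = _)))]
      rw [homogeneousComponent_of_mem ((mem_homogeneousSubmodule _ _).2
        (isHomogeneous_monomial a (rfl : u.degree = _)))]
      rw [degree_mapDomain]
      split
      · rw [rename_monomial]
      · rw [map_zero]
  | add p q hp hq => rw [map_add, map_add, map_add, hp, hq, map_add]

lemma ftilde_rename (σ : Equiv.Perm (Fin n)) (p : PolyP n) :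
    ftilde n i j hj (rename (Sum.map ⇑σ ⇑σ) p) = act n i j σ (ftilde n i j hj p) := by
  rw [ftilde_apply, ftilde_apply, map_sum]
  refine Finset.sum_congr rfl fun d _ => ?_
  rw [hc_rename, Emap_rename, map_sub, Pid_act]

/-- summing homogeneous components up to any bound at least the degree. -/
lemma sum_hc {p : PolyP n} {M : ℕ} (h : p.totalDegree ≤ M) :
    ∑ d ∈ Finset.range (M + 1), homogeneousComponent d p = p := by
  have hs := sum_homogeneousComponent p
  symm
  conv_lhs => rw [← hs]
  exact Finset.sum_subset (Finset.range_subset_range.2 (by omega))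
    (fun x _ hx => homogeneousComponent_eq_zero x p (by
      simp only [Finset.mem_range, not_lt] at hx; omega))

lemma pt_inj (hi : 1 ≤ i) : Function.Injective (pt n i j hj) := by
  intro c c' h
  induction c using Quotient.inductionOn' with
  | h τ =>
  induction c' using Quotient.inductionOn' with
  | h τ' =>
    have hq : (Quotient.mk'' τ : Qs n i j) = QuotientGroup.mk τ := rfl
    have hq' : (Quotient.mk'' τ' : Qs n i j) = QuotientGroup.mk τ' := rfl
    rw [hq, hq'] at h ⊢
    rw [pt_mk, pt_mk] at h
    rw [QuotientGroup.eq]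
    intro k hk
    have key : ∀ v : Fin n ⊕ Fin n, zeta n i j (Sum.map ⇑τ⁻¹ ⇑τ⁻¹ v)
        = zeta n i j (Sum.map ⇑τ'⁻¹ ⇑τ'⁻¹ v) := fun v => congrFun h v
    have hgoal : τ⁻¹ (τ' k) = k := by
      rcases lt_or_ge ((k : ℕ)) (i - 1) with hki | hki
      · have hv := key (Sum.inl (τ' k))
        simp only [Sum.map_inl, zeta, (by simp : τ'⁻¹ (τ' k) = k)] at hv
        rw [if_pos hki] at hv
        set v := τ⁻¹ (τ' k) with hvdef
        by_cases hvi : (v : ℕ) < i - 1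
        · rw [if_pos hvi] at hv
          have : (v : ℕ) = (k : ℕ) := by exact_mod_cast (by
            have := hv
            simp only [add_left_inj] at this
            exact_mod_cast this)
          exact Fin.val_injective this
        · rw [if_neg hvi] at hv
          exact absurd hv.symm (Nat.cast_add_one_ne_zero (k : ℕ))
      · have hcond : (k : ℕ) < i + j - 2 ∧ i - 1 ≤ (k : ℕ) := ⟨hk, hki⟩
        have hv := key (Sum.inr (τ' k))
        simp only [Sum.map_inr, zeta, (by simp : τ'⁻¹ (τ' k) = k)] at hv
        rw [if_pos hcond] at hv
        set v := τ⁻¹ (τ' k) with hvdef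
        by_cases hvi : (v : ℕ) < i + j - 2 ∧ i - 1 ≤ (v : ℕ)
        · rw [if_pos hvi] at hv
          have : (v : ℕ) = (k : ℕ) := by exact_mod_cast (by
            have := hv
            simp only [add_left_inj] at this
            exact_mod_cast this)
          exact Fin.val_injective this
        · rw [if_neg hvi] at hv
          exact absurd hv.symm (Nat.cast_add_one_ne_zero (k : ℕ))
    simpa [Equiv.Perm.mul_apply] using hgoal

end St5
end
noncomputable section
namespace St5
open MvPolynomial

variable (n i j : ℕ) (hj : 1 ≤ j)

/-- indicator functions are in the filtration at level `Nb`. -/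
lemma indicator_mem (hi : 1 ≤ i) (hn : 1 ≤ n) (c₀ : Qs n i j) :
    (fun c₁ : Qs n i j => if c₀ = c₁ then (1 : ℂ) else 0) ∈ Vf n i j hj (Nb n i j) := by
  classical
  have hne : Nonempty (Fin n ⊕ Fin n) := ⟨Sum.inl ⟨0, by omega⟩⟩
  have hsel : ∀ c : {c : Qs n i j // c ≠ c₀}, ∃ v, pt n i j hj c.1 v ≠ pt n i j hj c₀ v := by
    rintro ⟨c, hc⟩
    by_contra hcon
    push_neg at hcon
    exact hc (pt_inj n i j hj hi (funext hcon))
  choose sel hsel using hsel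
  set sel' : Qs n i j → (Fin n ⊕ Fin n) := fun c =>
    if h : c = c₀ then Classical.choice hne else sel ⟨c, h⟩ with hsel'def
  set P : PolyP n := ∏ c ∈ Finset.univ.erase c₀,
    ((X (sel' c) : PolyP n) - C (pt n i j hj c (sel' c))) with hPdef
  have hEP : ∀ c₁, Emap n i j hj P c₁ =
      ∏ c ∈ Finset.univ.erase c₀, (pt n i j hj c₁ (sel' c) - pt n i j hj c (sel' c)) := by
    intro c₁
    rw [Emap_apply, hPdef, map_prod]
    refine Finset.prod_congr rfl fun c _ => ?_
    rw [map_sub, aeval_X, aeval_C]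
    rfl
  set K : ℂ := ∏ c ∈ Finset.univ.erase c₀,
    (pt n i j hj c₀ (sel' c) - pt n i j hj c (sel' c)) with hKdef
  have hKne : K ≠ 0 := by
    rw [hKdef]
    apply Finset.prod_ne_zero_iff.2
    intro c hc
    have hc0 : c ≠ c₀ := (Finset.mem_erase.1 hc).1
    have : sel' c = sel ⟨c, hc0⟩ := by rw [hsel'def]; simp [hc0]
    rw [this]
    exact sub_ne_zero.2 (Ne.symm (hsel ⟨c, hc0⟩))
  have hind : (fun c₁ : Qs n i j => if c₀ = c₁ then (1 : ℂ) else 0)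
      = K⁻¹ • Emap n i j hj P := by
    funext c₁
    rcases eq_or_ne c₀ c₁ with h | h
    · subst h
      rw [if_pos rfl, Pi.smul_apply, hEP, ← hKdef, smul_eq_mul, inv_mul_cancel₀ hKne]
    · rw [if_neg h, Pi.smul_apply, hEP, smul_eq_mul]
      have : (∏ c ∈ Finset.univ.erase c₀,
          (pt n i j hj c₁ (sel' c) - pt n i j hj c (sel' c))) = 0 :=
        Finset.prod_eq_zero (Finset.mem_erase.2 ⟨Ne.symm h, Finset.mem_univ _⟩) (sub_self _)
      rw [this, mul_zero]
  rw [hind]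
  refine Submodule.smul_mem _ _ (Emap_mem_Vf n i j hj ?_)
  calc P.totalDegree ≤ ∑ c ∈ Finset.univ.erase c₀,
      ((X (sel' c) : PolyP n) - C (pt n i j hj c (sel' c))).totalDegree := by
        rw [hPdef]; exact totalDegree_finset_prod _ _
    _ ≤ ∑ _c ∈ Finset.univ.erase c₀, 1 := by
        refine Finset.sum_le_sum fun c _ => ?_
        refine le_trans (totalDegree_sub _ _) ?_
        simp [totalDegree_X, totalDegree_C]
    _ ≤ Nb n i j := by
        rw [Finset.sum_const, smul_eq_mul, mul_one]
        exact le_trans (Finset.card_erase_le) (by rw [Nb, Finset.card_univ])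

lemma Vf_le_range (hi : 1 ≤ i) :
    ∀ d, d ≤ Nb n i j → Vf n i j hj d ≤ LinearMap.range (ftilde n i j hj) := by
  intro d
  induction d with
  | zero =>
    intro _
    rw [Vf, Submodule.span_le]
    rintro _ ⟨p, hp, rfl⟩
    simp only [Set.mem_setOf_eq] at hp
    refine ⟨p, ?_⟩
    rw [ftilde_apply]
    rw [Finset.sum_eq_single 0]
    · have h0 : homogeneousComponent 0 p = p := by
        have := sum_hc n (show p.totalDegree ≤ 0 from hp)
        simpa using this
      rw [h0, Pid, if_pos rfl]
      simp
    · intro d _ hd0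
      rw [homogeneousComponent_eq_zero d p (by omega)]
      simp
    · intro h0
      exact absurd (Finset.mem_range.2 (by omega)) h0
  | succ d ih =>
    intro hdN
    rw [Vf, Submodule.span_le]
    rintro _ ⟨p, hp, rfl⟩
    simp only [Set.mem_setOf_eq] at hp
    set w : Qs n i j → ℂ := ∑ d' ∈ Finset.range (Nb n i j + 1),
      Pid n i j hj d' (Emap n i j hj (homogeneousComponent d' p)) with hwdef
    have hw : w ∈ Vf n i j hj d := by
      rw [hwdef]
      refine Submodule.sum_mem _ fun d' _ => ?_
      rcases Nat.eq_zero_or_pos d' with h0 | h1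
      · subst h0
        rw [Pid, if_pos rfl]
        simpa using Submodule.zero_mem _
      · rcases le_or_gt d' (d + 1) with hle | hgt
        · exact Vf_mono n i j hj (by omega) (Pid_mem_Vf n i j hj h1 _)
        · rw [homogeneousComponent_eq_zero d' p (by omega)]
          simpa using Submodule.zero_mem _
    have hfp : Emap n i j hj p = ftilde n i j hj p + w := by
      rw [ftilde_apply, hwdef, ← Finset.sum_add_distrib]
      have : ∀ d' ∈ Finset.range (Nb n i j + 1),
          (Emap n i j hj (homogeneousComponent d' p)
            - Pid n i j hj d' (Emap n i j hj (homogeneousComponent d' p)))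
          + Pid n i j hj d' (Emap n i j hj (homogeneousComponent d' p))
          = Emap n i j hj (homogeneousComponent d' p) := fun d' _ => by ring
      rw [Finset.sum_congr rfl this, ← map_sum, sum_hc n (le_trans hp (by omega))]
    rw [hfp]
    exact Submodule.add_mem _ (LinearMap.mem_range_self _ _) (ih (by omega) hw)

lemma ftilde_surj (hi : 1 ≤ i) (hn : 1 ≤ n) :
    Function.Surjective (ftilde n i j hj) := by
  rw [← LinearMap.range_eq_top]
  rw [eq_top_iff]
  intro u _
  have hrep : u = ∑ c : Qs n i j, u c • (fun c₁ : Qs n i j => if c = c₁ then (1 : ℂ) else 0) :=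
    pi_eq_sum_univ u
  rw [hrep]
  refine Submodule.sum_mem _ fun c _ => Submodule.smul_mem _ _ ?_
  exact Vf_le_range n i j hj hi (Nb n i j) le_rfl (indicator_mem n i j hj hi hn c)

end St5
end
noncomputable section
namespace St5
open MvPolynomial

variable (n : ℕ)

lemma fixLT_lt_iff {m : ℕ} {σ : Equiv.Perm (Fin n)} (hσ : σ ∈ fixLT n m) (x : Fin n) :
    ((σ x : Fin n) : ℕ) < m ↔ (x : ℕ) < m := by
  constructor
  · intro h
    have := fixLT_apply_lt n hσ h
    rw [← this] at h ⊢
    rwa [this] at h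
  · intro h
    rw [hσ x h]
    exact h

/-- the subgroup of permutations fixing the first `m` letters is equivalent to the
permutations of the remaining letters. -/
def fixLTEquiv (m : ℕ) : (fixLT n m) ≃ Equiv.Perm {k : Fin n // ¬ ((k : ℕ) < m)} where
  toFun σ := Equiv.Perm.subtypePerm σ.1 (fun x => not_congr (fixLT_lt_iff n σ.2 x))
  invFun π := ⟨Equiv.Perm.ofSubtype π, fun k hk =>
    Equiv.Perm.ofSubtype_apply_of_not_mem π (by simpa using hk)⟩
  left_inv σ := by
    ext k
    simp only []
    by_cases hk : (k : ℕ) < m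
    · rw [Equiv.Perm.ofSubtype_apply_of_not_mem _ (by simpa using hk)]
      rw [σ.2 k hk]
    · rw [Equiv.Perm.ofSubtype_apply_of_mem _ (by simpa using hk)]
      rfl
  right_inv π := by
    ext k
    simp only [Equiv.Perm.subtypePerm_apply]
    rw [Equiv.Perm.ofSubtype_apply_of_mem π k.2]

lemma card_fixLT (m : ℕ) (hm : m ≤ n) : Nat.card (fixLT n m) = (n - m).factorial := by
  classical
  rw [Nat.card_congr (fixLTEquiv n m)]
  rw [Nat.card_eq_fintype_card, Fintype.card_perm]
  congr 1
  rw [Fintype.card_subtype_compl]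
  have : Fintype.card {k : Fin n // ((k : ℕ) < m)} = m := by
    rw [Fintype.card_eq.2 ⟨{
      toFun := fun k => (⟨(k.1 : ℕ), k.2⟩ : Fin m)
      invFun := fun x => ⟨⟨(x : ℕ), lt_of_lt_of_le x.2 hm⟩, x.2⟩
      left_inv := fun k => by ext; rfl
      right_inv := fun x => by ext; rfl }⟩]
    exact Fintype.card_fin m
  rw [this, Fintype.card_fin]

lemma card_Qs (i j : ℕ) (hi : 1 ≤ i) (hj : 1 ≤ j) (hij : i + j ≤ n + 1) :
    n.factorial / (n + 2 - (i + j)).factorial ≤ Fintype.card (Qs n i j) := by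
  have hm : i + j - 2 ≤ n := by omega
  have hcard := Subgroup.card_eq_card_quotient_mul_card_subgroup (fixLT n (i + j - 2))
  rw [card_fixLT n (i + j - 2) hm] at hcard
  have hperm : Nat.card (Equiv.Perm (Fin n)) = n.factorial := by
    rw [Nat.card_eq_fintype_card, Fintype.card_perm, Fintype.card_fin]
  rw [hperm] at hcard
  have heq : n + 2 - (i + j) = n - (i + j - 2) := by omega
  rw [heq, hcard]
  rw [Nat.mul_div_cancel _ (Nat.factorial_pos _)]
  rw [Nat.card_eq_fintype_card]

end St5
end
noncomputable section
namespace St5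
open MvPolynomial

variable (n i j : ℕ)

lemma mkB_prodX (I : Finset (Fin n)) :
    mkB n (∏ t ∈ I, X (Sum.inl t)) = ∏ t ∈ I, xv n t := by
  rw [map_prod]; rfl

lemma mkB_prodY (J : Finset (Fin n)) :
    mkB n (∏ t ∈ J, X (Sum.inr t)) = ∏ t ∈ J, yv n t := by
  rw [map_prod]; rfl

lemma mkB_esX (k : ℕ) : mkB n (esX n k) = eX n k := by
  rw [esX, map_sum, eX]
  exact Finset.sum_congr rfl fun S _ => mkB_prodX n S

lemma mkB_esY (k : ℕ) : mkB n (esY n k) = fY n k := by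
  rw [esY, map_sum, fY]
  exact Finset.sum_congr rfl fun S _ => mkB_prodY n S

/-- the lifted generator set of `Iij` alone. -/
def genSet0 : Set (PolyP n) :=
  {p | ∃ k, 1 ≤ k ∧ k < i ∧ p = esX n k} ∪
  {p | ∃ I : Finset (Fin n), I.card = i ∧ p = ∏ t ∈ I, X (Sum.inl t)} ∪
  {p | ∃ k, 1 ≤ k ∧ k < j ∧ p = esY n k} ∪
  {p | ∃ J : Finset (Fin n), J.card = j ∧ p = ∏ t ∈ J, X (Sum.inr t)}

lemma genSet_eq : genSet n i j = genSet0 n i j ∪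
    Set.range (fun t : Fin n => (X (Sum.inl t) * X (Sum.inr t) : PolyP n)) := rfl

lemma image_genSet0 : mkB n '' genSet0 n i j = Sij n i j := by
  ext v
  constructor
  · rintro ⟨p, hp, rfl⟩
    rcases hp with ((⟨k, h1, h2, rfl⟩ | ⟨I, hI, rfl⟩) | ⟨k, h1, h2, rfl⟩) | ⟨J, hJ, rfl⟩
    · exact Or.inl (Or.inl (Or.inl ⟨k, h1, h2, (mkB_esX n k)⟩))
    · exact Or.inl (Or.inl (Or.inr ⟨I, hI, (mkB_prodX n I)⟩))
    · exact Or.inl (Or.inr ⟨k, h1, h2, (mkB_esY n k)⟩)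
    · exact Or.inr ⟨J, hJ, (mkB_prodY n J)⟩
  · rintro (((⟨k, h1, h2, rfl⟩ | ⟨I, hI, rfl⟩) | ⟨k, h1, h2, rfl⟩) | ⟨J, hJ, rfl⟩)
    · exact ⟨esX n k, Or.inl (Or.inl (Or.inl ⟨k, h1, h2, rfl⟩)), mkB_esX n k⟩
    · exact ⟨∏ t ∈ I, X (Sum.inl t), Or.inl (Or.inl (Or.inr ⟨I, hI, rfl⟩)), mkB_prodX n I⟩
    · exact ⟨esY n k, Or.inl (Or.inr ⟨k, h1, h2, rfl⟩), mkB_esY n k⟩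
    · exact ⟨∏ t ∈ J, X (Sum.inr t), Or.inr ⟨J, hJ, rfl⟩, mkB_prodY n J⟩

lemma mem_span_genSet {p : PolyP n} (hp : mkB n p ∈ Iij n i j) :
    p ∈ Ideal.span (genSet n i j) := by
  have hIij : Iij n i j = Ideal.map (mkB n) (Ideal.span (genSet0 n i j)) := by
    rw [Iij, Ideal.map_span, image_genSet0]
  have hsurj : Function.Surjective (mkB n) := Ideal.Quotient.mkₐ_surjective ℂ _
  have hmem : p ∈ Ideal.comap (mkB n) (Iij n i j) := Ideal.mem_comap.2 hp
  rw [hIij, Ideal.comap_map_of_surjective (mkB n) hsurj] at hmem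
  have hker : Ideal.comap (mkB n) (⊥ : Ideal (B n)) = Bideal n := by
    have : RingHom.ker (mkB n) = Bideal n := Ideal.Quotient.mkₐ_ker ℂ (Bideal n)
    exact this
  rw [hker] at hmem
  have : Ideal.span (genSet0 n i j) ⊔ Bideal n = Ideal.span (genSet n i j) := by
    rw [genSet_eq, Ideal.span_union]
  rwa [this] at hmem

end St5
end
noncomputable section
namespace St5
open MvPolynomial

theorem main (n i j : ℕ) (hi : 1 ≤ i) (hj : 1 ≤ j) (hij : i + j ≤ n + 1) :
    ∃ f : (B n ⧸ Iij n i j) →ₗ[ℂ] ((Equiv.Perm (Fin n) ⧸ fixLT n (i + j - 2)) → ℂ),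
      Function.Surjective f ∧
      (∀ (σ : Equiv.Perm (Fin n)) (P : B n),
        f (Ideal.Quotient.mk (Iij n i j) (permB n σ P)) =
          cosetAct n (i + j - 2) σ (f (Ideal.Quotient.mk (Iij n i j) P))) ∧
      (↑(n.factorial / (n + 2 - (i + j)).factorial) : Cardinal) ≤
        Module.rank ℂ (B n ⧸ Iij n i j) := by
  classical
  have hn : 1 ≤ n := by omega
  set φ := ftilde n i j hj with hφ
  have hker1 : (Bideal n).restrictScalars ℂ ≤ LinearMap.ker φ := by
    intro p hp
    have hp' : p ∈ Ideal.span (genSet n i j) := by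
      refine Ideal.span_mono ?_ hp
      rw [genSet_eq]
      exact Set.subset_union_right
    exact ftilde_span_zero n i j hj hi hp'
  set F1 : B n →ₗ[ℂ] (Qs n i j → ℂ) :=
    (Submodule.liftQ ((Bideal n).restrictScalars ℂ) φ hker1) ∘ₗ
      (Submodule.Quotient.restrictScalarsEquiv ℂ
        ((Bideal n) : Submodule (PolyP n) (PolyP n))).symm.toLinearMap with hF1def
  have hF1 : ∀ p : PolyP n, F1 (mkB n p) = φ p := by
    intro p
    rw [hF1def]
    simp only [LinearMap.coe_comp, Function.comp_apply, LinearEquiv.coe_toLinearMap]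
    have h1 : (mkB n p : B n) = Submodule.Quotient.mk p := by
      rw [Ideal.Quotient.mkₐ_eq_mk, ← Ideal.Quotient.mk_eq_mk]
    rw [h1, Submodule.Quotient.restrictScalarsEquiv_symm_mk, Submodule.liftQ_apply]
  have hker2 : (Iij n i j).restrictScalars ℂ ≤ LinearMap.ker F1 := by
    intro v hv
    obtain ⟨p, rfl⟩ := Ideal.Quotient.mkₐ_surjective ℂ (Bideal n) v
    rw [LinearMap.mem_ker, hF1]
    exact ftilde_span_zero n i j hj hi (mem_span_genSet n i j hv)
  set F2 : (B n ⧸ Iij n i j) →ₗ[ℂ] (Qs n i j → ℂ) :=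
    (Submodule.liftQ ((Iij n i j).restrictScalars ℂ) F1 hker2) ∘ₗ
      (Submodule.Quotient.restrictScalarsEquiv ℂ
        ((Iij n i j) : Submodule (B n) (B n))).symm.toLinearMap with hF2def
  have hF2 : ∀ v : B n, F2 (Ideal.Quotient.mk (Iij n i j) v) = F1 v := by
    intro v
    rw [hF2def]
    simp only [LinearMap.coe_comp, Function.comp_apply, LinearEquiv.coe_toLinearMap]
    rw [← Ideal.Quotient.mk_eq_mk, Submodule.Quotient.restrictScalarsEquiv_symm_mk,
      Submodule.liftQ_apply]
  have hsurj : Function.Surjective F2 := by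
    intro u
    obtain ⟨p, hp⟩ := ftilde_surj n i j hj hi hn u
    exact ⟨Ideal.Quotient.mk (Iij n i j) (mkB n p), by rw [hF2, hF1]; exact hp⟩
  refine ⟨F2, hsurj, ?_, ?_⟩
  · intro σ P
    obtain ⟨p, rfl⟩ := Ideal.Quotient.mkₐ_surjective ℂ (Bideal n) P
    have hperm : permB n σ (mkB n p) = mkB n (rename (Sum.map ⇑σ ⇑σ) p) := by
      rw [permB, Ideal.Quotient.mkₐ_eq_mk]
      rfl
    rw [hperm, hF2, hF1, hF2, hF1]
    have := ftilde_rename n i j hj σ p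
    rw [← hφ] at this
    rw [this]
    rfl
  · have hrank := LinearMap.rank_le_of_surjective F2 hsurj
    have hfun : Module.rank ℂ (Qs n i j → ℂ) = (Fintype.card (Qs n i j) : Cardinal) :=
      rank_fun'
    refine le_trans ?_ hrank
    rw [hfun]
    exact_mod_cast Nat.cast_le.2 (card_Qs n i j hi hj hij)

end St5
end

/-- For `i, j ≥ 1` with `i + j ≤ n + 1`, there is a surjective
`ℂ[Sₙ]`-module homomorphism from `R^n_{i,j} = Bₙ/I^n_{i,j}` onto the permutation module
`ℂ[Sₙ/S_{n−i−j+2}]`; in particular `dim R^n_{i,j} ≥ n!/(n−i−j+2)!`. -/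
theorem surjection_onto_permutation_module (n i j : ℕ) (hi : 1 ≤ i) (hj : 1 ≤ j)
    (hij : i + j ≤ n + 1) :
    ∃ f : (B n ⧸ Iij n i j) →ₗ[ℂ] ((Equiv.Perm (Fin n) ⧸ fixLT n (i + j - 2)) → ℂ),
      Function.Surjective f ∧
      (∀ (σ : Equiv.Perm (Fin n)) (P : B n),
        f (Ideal.Quotient.mk (Iij n i j) (permB n σ P)) =
          cosetAct n (i + j - 2) σ (f (Ideal.Quotient.mk (Iij n i j) P))) ∧
      (↑(n.factorial / (n + 2 - (i + j)).factorial) : Cardinal) ≤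
        Module.rank ℂ (B n ⧸ Iij n i j) := by
  exact St5.main n i j hi hj hij

end
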